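/- arXiv:2102.02112 — 2 statements merged into one kernel-verified Lean document; each statement's English description precedes it below -/
import Mathlib

section
/- Let f : [c,d] → ℝ be continuous. Then there exists x ∈ [c,d) such that the upper right Dini derivative of f at x satisfies limsup_{t→x⁺} (f(t)-f(x))/(t-x) ≤ (f(d)-f(c))/(d-c). -/
open Filter Set

/-- Upper right Dini derivative, valued in the extended reals. -/
noncomputable def dPlus (f : ℝ → ℝ) (x : ℝ) : EReal :=
  Filter.limsup (fun t => (((f t - f x) / (t - x) : ℝ) : EReal)) (nhdsWithin x (Set.Ioi x))

lemma key_climb (c d r : ℝ) (f : ℝ → ℝ) (hf : ContinuousOn f (Set.Icc c d))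
    (H : ∀ x ∈ Set.Ico c d, ((r : EReal) < dPlus f x)) :
    ∀ a b : ℝ, c ≤ a → a ≤ b → b ≤ d → r * (b - a) ≤ f b - f a := by
  intro a b hca hab hbd
  set S : Set ℝ := {x | x ∈ Set.Icc a b ∧ r * (x - a) ≤ f x - f a} with hS
  have haS : a ∈ S := by simp [hS, hab]
  have hSb : BddAbove S := ⟨b, fun x hx => hx.1.2⟩
  have hSne : S.Nonempty := ⟨a, haS⟩
  have hclosed : IsClosed S := by
    have hsub : Set.Icc a b ⊆ Set.Icc c d := Set.Icc_subset_Icc hca hbd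
    have hfc : ContinuousOn f (Set.Icc a b) := hf.mono hsub
    have hrepr : S = Set.Icc a b ∩ (fun x => f x - f a - r * (x - a)) ⁻¹' Set.Ici 0 := by
      ext x
      simp only [hS, Set.mem_inter_iff, Set.mem_setOf_eq, Set.mem_preimage, Set.mem_Ici]
      constructor
      · rintro ⟨h1, h2⟩; exact ⟨h1, by linarith⟩
      · rintro ⟨h1, h2⟩; exact ⟨h1, by linarith⟩
    rw [hrepr]
    apply ContinuousOn.preimage_isClosed_of_isClosed
      (f := fun x => f x - f a - r * (x - a)) (s := Set.Icc a b) (t := Set.Ici 0)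
    · exact (hfc.sub continuousOn_const).sub (Continuous.continuousOn (by continuity))
    · exact isClosed_Icc
    · exact isClosed_Ici
  set x₀ := sSup S with hx₀
  have hx₀S : x₀ ∈ S := hclosed.csSup_mem hSne hSb
  have hax₀ : a ≤ x₀ := le_csSup hSb haS
  have hx₀b : x₀ ≤ b := hx₀S.1.2
  by_cases hxb : x₀ = b
  · have := hx₀S.2
    rw [hxb] at this
    exact this
  · exfalso
    have hx₀lt : x₀ < b := lt_of_le_of_ne hx₀b hxb
    have hx₀Ico : x₀ ∈ Set.Ico c d := ⟨hca.trans hax₀, lt_of_lt_of_le hx₀lt hbd⟩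
    have hlim := H x₀ hx₀Ico
    have hfreq : ∃ᶠ t in nhdsWithin x₀ (Set.Ioi x₀),
        (r : EReal) < (((f t - f x₀) / (t - x₀) : ℝ) : EReal) :=
      Filter.frequently_lt_of_lt_limsup (by isBoundedDefault) hlim
    have hevent : ∀ᶠ t in nhdsWithin x₀ (Set.Ioi x₀), t ∈ Set.Iio b := by
      apply eventually_nhdsWithin_of_eventually_nhds
      exact eventually_of_mem (Iio_mem_nhds hx₀lt) (fun x hx => hx)
    have hself : ∀ᶠ t in nhdsWithin x₀ (Set.Ioi x₀), t ∈ Set.Ioi x₀ :=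
      self_mem_nhdsWithin
    obtain ⟨t, hslope, htb, htx₀⟩ := (hfreq.and_eventually (hevent.and hself)).exists
    have htx₀' : x₀ < t := htx₀
    have hpos : (0 : ℝ) < t - x₀ := by linarith
    have hslope' : r < (f t - f x₀) / (t - x₀) := by
      exact_mod_cast hslope
    have h1 : r * (t - x₀) < f t - f x₀ := by
      rw [lt_div_iff₀ hpos] at hslope'
      linarith [hslope']
    have h2 : r * (x₀ - a) ≤ f x₀ - f a := hx₀S.2
    have htS : t ∈ S := by
      refine ⟨⟨hax₀.trans htx₀'.le, htb.le⟩, ?_⟩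
      nlinarith
    have : t ≤ x₀ := le_csSup hSb htS
    linarith

/-- One-sided mean value inequality for the upper right Dini derivative. -/
theorem exists_dPlus_le_slope (c d : ℝ) (hcd : c < d) (f : ℝ → ℝ)
    (hf : ContinuousOn f (Set.Icc c d)) :
    ∃ x ∈ Set.Ico c d, dPlus f x ≤ (((f d - f c) / (d - c) : ℝ) : EReal) := by
  by_contra hcon
  push_neg at hcon
  set r : ℝ := (f d - f c) / (d - c) with hr
  have hdc : d - c ≠ 0 := by linarith
  have hrdc : r * (d - c) = f d - f c := by
    rw [hr, div_mul_cancel₀ _ hdc]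
  have H : ∀ x ∈ Set.Ico c d, ((r : EReal) < dPlus f x) := hcon
  have hkey := key_climb c d r f hf H
  -- f is linear on [c,d]
  have hlin : ∀ x ∈ Set.Icc c d, f x = f c + r * (x - c) := by
    intro x hx
    have h1 : r * (x - c) ≤ f x - f c := hkey c x le_rfl hx.1 hx.2
    have h2 : r * (d - x) ≤ f d - f x := hkey x d hx.1 hx.2 le_rfl
    nlinarith
  -- then dPlus f c = r, contradiction
  have hev : ∀ᶠ t in nhdsWithin c (Set.Ioi c),
      (((f t - f c) / (t - c) : ℝ) : EReal) = (r : EReal) := by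
    have hIio : ∀ᶠ t in nhdsWithin c (Set.Ioi c), t ∈ Set.Iio d := by
      apply eventually_nhdsWithin_of_eventually_nhds
      exact eventually_of_mem (Iio_mem_nhds hcd) (fun x hx => hx)
    filter_upwards [hIio, self_mem_nhdsWithin] with t htd htc
    have htc' : c < t := htc
    have hft : f t = f c + r * (t - c) := hlin t ⟨htc'.le, le_of_lt htd⟩
    have : (f t - f c) / (t - c) = r := by
      rw [hft]
      rw [add_sub_cancel_left, mul_div_assoc, div_self (sub_ne_zero.mpr htc'.ne'), mul_one]
    rw [this]
  have : dPlus f c = (r : EReal) := by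
    unfold dPlus
    rw [Filter.limsup_congr hev]
    exact Filter.limsup_const _
  exact absurd (H c ⟨le_rfl, hcd⟩) (by rw [this]; exact lt_irrefl _)
end

section
/- Let k ∈ ℝ and suppose g, g̃ : [0,μ] → ℝ are continuous with g(0) = g̃(0) and g(μ) = g̃(μ), where g̃ is twice differentiable on (0,μ) with g̃''(t) + k·g̃(t) = 1 for all t ∈ (0,μ), and g satisfies g''(t) + k·g(t) ≤ 1 in the support sense for all t ∈ (0,μ) (i.e., for each t there is A ∈ ℝ with g(t+τ) ≤ g(t) + Aτ + ((1 − k g(t))/2)τ² + o(τ²)). Assume μ < π/√k if k > 0. Then g(t) ≥ g̃(t) for all t ∈ [0,μ]. -/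
open Filter Set

/-- `g''(t) ≤ B` in the support sense. -/
def SuppSecondLE (g : ℝ → ℝ) (t B : ℝ) : Prop :=
  ∃ A : ℝ, ∀ ε > (0 : ℝ), ∀ᶠ τ in nhds (0 : ℝ),
    g (t + τ) ≤ g t + A * τ + B / 2 * τ ^ 2 + ε * τ ^ 2


lemma taylor2 (f : ℝ → ℝ) (t : ℝ)
    (hf : ∀ᶠ s in nhds t, DifferentiableAt ℝ f s)
    (hf2 : DifferentiableAt ℝ (deriv f) t) :
    ∀ ε > (0:ℝ), ∀ᶠ τ in nhds (0:ℝ),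
      |f (t + τ) - f t - deriv f t * τ - deriv (deriv f) t / 2 * τ ^ 2| ≤ ε * τ ^ 2 := by
  set c := deriv (deriv f) t with hc
  set F : ℝ → ℝ := fun τ => f (t + τ) - f t - deriv f t * τ - c / 2 * τ ^ 2 with hF
  set F' : ℝ → ℝ := fun τ => deriv f (t + τ) - deriv f t - c * τ with hF'
  have htend : Tendsto (fun τ : ℝ => t + τ) (nhds 0) (nhds t) := by
    simpa using (tendsto_const_nhds.add tendsto_id : Tendsto (fun τ : ℝ => t + τ) (nhds 0) (nhds (t + 0)))
  have hdiff : ∀ᶠ τ in nhds (0:ℝ), DifferentiableAt ℝ f (t + τ) := htend.eventually hf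
  have hdF : ∀ᶠ τ in nhds (0:ℝ), HasDerivAt F (F' τ) τ := by
    filter_upwards [hdiff] with τ hτ
    have h1 : HasDerivAt (fun τ : ℝ => f (t + τ)) (deriv f (t + τ)) τ := by
      have := (hτ.hasDerivAt).comp τ ((hasDerivAt_id τ).const_add t)
      rwa [mul_one] at this
    have h2 : HasDerivAt (fun τ : ℝ => deriv f t * τ) (deriv f t) τ := by
      simpa using (hasDerivAt_id τ).const_mul (deriv f t)
    have h3 : HasDerivAt (fun τ : ℝ => c / 2 * τ ^ 2) (c * τ) τ := by
      have := (hasDerivAt_pow 2 τ).const_mul (c / 2)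
      refine this.congr_deriv ?_
      norm_num
      ring
    exact ((h1.sub_const (f t)).sub h2).sub h3
  have hG : ∀ τ : ℝ, HasDerivAt (fun τ : ℝ => τ ^ 2) (2 * τ) τ := by
    intro τ; simpa using hasDerivAt_pow 2 τ
  have hcont : Tendsto F (nhds 0) (nhds 0) := by
    have hfc : ContinuousAt f t := (hf.self_of_nhds).continuousAt
    have : ContinuousAt F 0 := by
      apply ContinuousAt.sub
      apply ContinuousAt.sub
      apply ContinuousAt.sub
      · have : ContinuousAt f (t + 0) := by simpa using hfc
        exact this.comp (by fun_prop : ContinuousAt (fun τ : ℝ => t + τ) 0)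
      · fun_prop
      · fun_prop
      · fun_prop
    simpa [hF] using this.tendsto
  have hslope : Tendsto (fun τ : ℝ => (deriv f (t + τ) - deriv f t) / τ) (nhdsWithin 0 {(0:ℝ)}ᶜ) (nhds c) := by
    have h := hasDerivAt_iff_tendsto_slope.mp hf2.hasDerivAt
    have hmap : Tendsto (fun τ : ℝ => t + τ) (nhdsWithin 0 {(0:ℝ)}ᶜ) (nhdsWithin t {t}ᶜ) := by
      apply Tendsto.inf htend
      apply tendsto_principal_principal.mpr
      intro τ hτ
      simp only [mem_compl_iff, mem_singleton_iff] at *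
      intro h'
      exact hτ (by linarith)
    have := h.comp hmap
    apply this.congr'
    filter_upwards [self_mem_nhdsWithin] with τ hτ
    simp only [Function.comp, slope, vsub_eq_sub]
    rw [add_sub_cancel_left, smul_eq_mul]
    ring
  have hdiv : Tendsto (fun τ : ℝ => F' τ / (2 * τ)) (nhdsWithin 0 {(0:ℝ)}ᶜ) (nhds 0) := by
    have h2 : Tendsto (fun τ : ℝ => ((deriv f (t + τ) - deriv f t) / τ - c) / 2) (nhdsWithin 0 {(0:ℝ)}ᶜ) (nhds 0) := by
      have := ((hslope.sub_const c).div_const 2)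
      simpa using this
    apply h2.congr'
    filter_upwards [self_mem_nhdsWithin] with τ hτ
    have hτ0 : τ ≠ 0 := hτ
    field_simp [hF']
    ring
  have hlh : Tendsto (fun τ : ℝ => F τ / τ ^ 2) (nhdsWithin 0 {(0:ℝ)}ᶜ) (nhds 0) := by
    apply HasDerivAt.lhopital_zero_nhdsNE (f' := F') (g' := fun τ => 2 * τ)
    · exact nhdsWithin_le_nhds hdF
    · exact Eventually.of_forall fun τ => hG τ
    · filter_upwards [self_mem_nhdsWithin] with τ hτ
      have : (τ:ℝ) ≠ 0 := hτ
      positivity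
    · exact tendsto_nhdsWithin_of_tendsto_nhds hcont
    · have : Tendsto (fun τ : ℝ => τ ^ 2) (nhds 0) (nhds 0) := by
        simpa using (continuous_pow 2).tendsto (0:ℝ)
      exact tendsto_nhdsWithin_of_tendsto_nhds this
    · exact hdiv
  intro ε hε
  have h1 : ∀ᶠ τ in nhdsWithin 0 {(0:ℝ)}ᶜ, |F τ / τ ^ 2| < ε := by
    have := hlh.eventually (eventually_abs_sub_lt 0 hε)
    simpa using this
  rw [eventually_nhdsWithin_iff] at h1
  filter_upwards [h1] with τ hτ
  rcases eq_or_ne τ 0 with rfl | hτ0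
  · simp [hF]
  · refine le_of_lt ?_
    have h := hτ hτ0
    rw [abs_div] at h
    have hτ2 : (0:ℝ) < |τ ^ 2| := by positivity
    have := (div_lt_iff₀ hτ2).mp h
    calc |F τ| < ε * |τ ^ 2| := this
      _ = ε * τ ^ 2 := by rw [abs_of_nonneg (by positivity)]

/-- Comparison of a support-sense subsolution of `g'' + k g ≤ 1` with a classical
solution of `g̃'' + k g̃ = 1` agreeing at the endpoints. -/
theorem subsolution_ge_solution (k μ : ℝ) (hμ : 0 < μ)
    (hμπ : 0 < k → μ < Real.pi / Real.sqrt k)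
    (g gt : ℝ → ℝ)
    (hg : ContinuousOn g (Set.Icc 0 μ)) (hgt : ContinuousOn gt (Set.Icc 0 μ))
    (h0 : g 0 = gt 0) (hμ0 : g μ = gt μ)
    (hdiff : ∀ t ∈ Set.Ioo 0 μ, DifferentiableAt ℝ gt t)
    (hdiff2 : ∀ t ∈ Set.Ioo 0 μ, DifferentiableAt ℝ (deriv gt) t)
    (hode : ∀ t ∈ Set.Ioo 0 μ, deriv (deriv gt) t + k * gt t = 1)
    (hsupp : ∀ t ∈ Set.Ioo 0 μ, SuppSecondLE g t (1 - k * g t)) :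
    ∀ t ∈ Set.Icc 0 μ, gt t ≤ g t := by
  have hπ : 0 < Real.pi := Real.pi_pos
  -- choose the frequency α of the barrier
  obtain ⟨α, hα0, hαμ, hkα⟩ : ∃ α : ℝ, 0 < α ∧ α * μ < Real.pi ∧ k < α ^ 2 := by
    by_cases hk : k ≤ 0
    · refine ⟨Real.pi / (2 * μ), by positivity, ?_, lt_of_le_of_lt hk (by positivity)⟩
      have h1 : Real.pi / (2 * μ) * μ = Real.pi / 2 := by field_simp
      rw [h1]; linarith
    · push_neg at hk
      have hsq : 0 < Real.sqrt k := Real.sqrt_pos.mpr hk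
      have h1 : μ < Real.pi / Real.sqrt k := hμπ hk
      have h2 : Real.sqrt k < Real.pi / μ := by
        rw [lt_div_iff₀ hsq] at h1
        rw [lt_div_iff₀ hμ]
        nlinarith
      refine ⟨(Real.sqrt k + Real.pi / μ) / 2, by positivity, ?_, ?_⟩
      · rw [div_mul_eq_mul_div, div_lt_iff₀ (by norm_num : (0:ℝ) < 2)]
        have : Real.pi / μ * μ = Real.pi := div_mul_cancel₀ _ hμ.ne'
        nlinarith
      · have hsk : Real.sqrt k < (Real.sqrt k + Real.pi / μ) / 2 := by linarith
        have : Real.sqrt k ^ 2 < ((Real.sqrt k + Real.pi / μ) / 2) ^ 2 := by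
          apply pow_lt_pow_left₀ hsk hsq.le
          norm_num
        rwa [Real.sq_sqrt hk.le] at this
  set β := α * μ / 2 with hβ
  set ψ : ℝ → ℝ := fun s => Real.cos (α * s - β) with hψ
  have hβ2 : β < Real.pi / 2 := by rw [hβ]; linarith
  have hψpos : ∀ s ∈ Set.Icc 0 μ, 0 < ψ s := by
    intro s hs
    apply Real.cos_pos_of_mem_Ioo
    constructor
    · have h1 : 0 ≤ α * s := mul_nonneg hα0.le hs.1
      have h2 : (0:ℝ) < Real.pi / 2 := by positivity
      linarith
    · have : α * s ≤ α * μ := mul_le_mul_of_nonneg_left hs.2 hα0.le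
      rw [hβ] at *
      linarith
  have hlin : ∀ s : ℝ, HasDerivAt (fun s : ℝ => α * s - β) α s := by
    intro s
    simpa using ((hasDerivAt_id s).const_mul α).sub_const β
  have hψd : ∀ s : ℝ, HasDerivAt ψ (-Real.sin (α * s - β) * α) s := fun s => (hlin s).cos
  have hψ1 : deriv ψ = fun s => -Real.sin (α * s - β) * α := funext fun s => (hψd s).deriv
  have hψd2 : ∀ s : ℝ, HasDerivAt (deriv ψ) (-(α ^ 2 * ψ s)) s := by
    intro s
    rw [hψ1]
    have := ((hlin s).sin.neg).mul_const α
    refine this.congr_deriv ?_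
    rw [hψ]
    ring
  have hψ2 : ∀ s : ℝ, deriv (deriv ψ) s = -(α ^ 2 * ψ s) := fun s => (hψd2 s).deriv
  have hψcont : Continuous ψ := Real.continuous_cos.comp (by fun_prop)
  -- main argument
  by_contra hcon
  push_neg at hcon
  obtain ⟨t₁, ht₁, hlt⟩ := hcon
  set u : ℝ → ℝ := fun s => (gt s - g s) / ψ s with hu
  have hucont : ContinuousOn u (Set.Icc 0 μ) :=
    (hgt.sub hg).div hψcont.continuousOn (fun s hs => (hψpos s hs).ne')
  obtain ⟨t₀, ht₀, hmax⟩ := isCompact_Icc.exists_isMaxOn ⟨0, Set.left_mem_Icc.mpr hμ.le⟩ hucont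
  set m := u t₀ with hmdef
  have hm : 0 < m := by
    have h1 : 0 < u t₁ := div_pos (by linarith) (hψpos t₁ ht₁)
    exact lt_of_lt_of_le h1 (hmax ht₁)
  have hWle : ∀ s ∈ Set.Icc 0 μ, gt s - g s ≤ m * ψ s := by
    intro s hs
    have h1 : u s ≤ m := hmax hs
    rw [hu] at h1
    exact (div_le_iff₀ (hψpos s hs)).mp h1
  have hW0 : gt t₀ - g t₀ = m * ψ t₀ := by
    show gt t₀ - g t₀ = (gt t₀ - g t₀) / ψ t₀ * ψ t₀
    exact (div_mul_cancel₀ _ (hψpos t₀ ht₀).ne').symm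
  have ht₀i : t₀ ∈ Set.Ioo 0 μ := by
    have hu0 : u 0 = 0 := by rw [hu]; simp [h0]
    have huμ : u μ = 0 := by rw [hu]; simp [hμ0]
    rcases ht₀.1.lt_or_eq with h | h
    · rcases ht₀.2.lt_or_eq with h' | h'
      · exact ⟨h, h'⟩
      · exfalso; rw [hmdef, h', huμ] at hm; exact lt_irrefl 0 hm
    · exfalso; rw [hmdef, ← h, hu0] at hm; exact lt_irrefl 0 hm
  have hψ0 : 0 < ψ t₀ := hψpos t₀ ht₀
  set ε := m * (α ^ 2 - k) * ψ t₀ / (8 * (1 + m)) with hεdef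
  have hP : 0 < m * (α ^ 2 - k) * ψ t₀ := by
    apply mul_pos (mul_pos hm (by linarith)) hψ0
  have hε : 0 < ε := by
    rw [hεdef]; positivity
  obtain ⟨A, hA⟩ := hsupp t₀ ht₀i
  have hev : ∀ᶠ s in nhds t₀, DifferentiableAt ℝ gt s := by
    filter_upwards [isOpen_Ioo.mem_nhds ht₀i] with s hs
    exact hdiff s hs
  have hgtTaylor := taylor2 gt t₀ hev (hdiff2 t₀ ht₀i) ε hε
  have hψTaylor := taylor2 ψ t₀ (Eventually.of_forall fun s => (hψd s).differentiableAt)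
    ((hψd2 t₀).differentiableAt) ε hε
  have hmem : ∀ᶠ τ in nhds (0:ℝ), t₀ + τ ∈ Set.Icc 0 μ := by
    have htend : Tendsto (fun τ : ℝ => t₀ + τ) (nhds 0) (nhds t₀) := by
      simpa using (tendsto_const_nhds.add tendsto_id :
        Tendsto (fun τ : ℝ => t₀ + τ) (nhds 0) (nhds (t₀ + 0)))
    filter_upwards [htend.eventually (isOpen_Ioo.eventually_mem ht₀i)] with τ hτ
    exact Set.Ioo_subset_Icc_self hτ
  have hall := ((hA ε hε).and hgtTaylor).and (hψTaylor.and hmem)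
  rw [Metric.eventually_nhds_iff] at hall
  obtain ⟨δ, hδ, hball⟩ := hall
  set τ := δ / 2 with hτdef
  have hτpos : 0 < τ := by positivity
  have hpl := hball (show dist τ 0 < δ by rw [Real.dist_eq, sub_zero, abs_of_pos hτpos]; linarith)
  have hmi := hball (show dist (-τ) 0 < δ by
    rw [Real.dist_eq, sub_zero, abs_of_neg (by linarith : -τ < 0)]; simp; linarith)
  obtain ⟨⟨Hgp, Hgtp⟩, Hpp, Hiccp⟩ := hpl
  obtain ⟨⟨Hgm, Hgtm⟩, Hpm, Hiccm⟩ := hmi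
  rw [abs_le] at Hgtp Hgtm Hpp Hpm
  have HWp := hWle _ Hiccp
  have HWm := hWle _ Hiccm
  -- multiply ψ Taylor bounds by m ≥ 0
  have hPmp : m * ψ (t₀ + τ) ≤ m * (ψ t₀ + deriv ψ t₀ * τ + deriv (deriv ψ) t₀ / 2 * τ ^ 2 + ε * τ ^ 2) := by
    apply mul_le_mul_of_nonneg_left _ hm.le
    linarith [Hpp.2]
  have hPmm : m * ψ (t₀ + -τ) ≤ m * (ψ t₀ + deriv ψ t₀ * (-τ) + deriv (deriv ψ) t₀ / 2 * (-τ) ^ 2 + ε * (-τ) ^ 2) := by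
    apply mul_le_mul_of_nonneg_left _ hm.le
    linarith [Hpm.2]
  have hd2 : deriv (deriv gt) t₀ = 1 - k * gt t₀ := by linarith [hode t₀ ht₀i]
  have hp2 : deriv (deriv ψ) t₀ = -(α ^ 2 * ψ t₀) := hψ2 t₀
  have hτ2 : 0 < τ ^ 2 := by positivity
  -- derive the key scalar inequality
  have hd2τ : deriv (deriv gt) t₀ / 2 * τ ^ 2 = (1 - k * gt t₀) / 2 * τ ^ 2 := by rw [hd2]
  have hp2τ : m * (deriv (deriv ψ) t₀ / 2 * τ ^ 2) = m * (-(α ^ 2 * ψ t₀) / 2 * τ ^ 2) := by rw [hp2]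
  have hW0τ : k * (gt t₀ - g t₀) * τ ^ 2 = k * (m * ψ t₀) * τ ^ 2 := by rw [hW0]
  have hkey : m * (α ^ 2 - k) * ψ t₀ * τ ^ 2 ≤ (4 + 2 * m) * (ε * τ ^ 2) := by
    linarith [Hgp, Hgm, Hgtp.1, Hgtm.1, hPmp, hPmm, HWp, HWm, hW0τ, hd2τ, hp2τ]
  have hεP : ε * τ ^ 2 * (8 * (1 + m)) = m * (α ^ 2 - k) * ψ t₀ * τ ^ 2 := by
    rw [hεdef]
    field_simp
  have hQ : 0 < ε * τ ^ 2 := by positivity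
  have hR : 0 < m * (ε * τ ^ 2) := mul_pos hm hQ
  linarith
end
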